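/- arXiv:2312.10830 — 2 statements merged into one kernel-verified Lean document; each statement's English description precedes it below -/
import Mathlib

section
/- Let C be a hereditary class of graphs. Then the class G_C is hereditary, i.e., every induced subgraph of a graph in G_C belongs (up to isomorphism) to G_C. -/
open SimpleGraph

namespace PaperSep

variable {V : Type} {W : Type}

/-- There is a walk from `a` to `b` in `G` all of whose vertices avoid the set `S`. -/
def ConnAvoid (G : SimpleGraph V) (S : Set V) (a b : V) : Prop :=
  ∃ p : G.Walk a b, ∀ v ∈ p.support, v ∉ S

/-- `S` is an `(a,b)`-separator of `G`. -/
def IsSep (G : SimpleGraph V) (a b : V) (S : Set V) : Prop :=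
  a ∉ S ∧ b ∉ S ∧ ¬ ConnAvoid G S a b

/-- `S` is a minimal `(a,b)`-separator of `G`. -/
def IsMinSep (G : SimpleGraph V) (a b : V) (S : Set V) : Prop :=
  IsSep G a b S ∧ ∀ T ⊂ S, ¬ IsSep G a b T

/-- `S` is a minimal separator of `G`. -/
def IsMinimalSeparator (G : SimpleGraph V) (S : Set V) : Prop :=
  ∃ a b : V, a ≠ b ∧ ¬ G.Adj a b ∧ IsMinSep G a b S

/-- `K` is a cutset of `G`, i.e. `G − K` is disconnected. -/
def IsCutset (G : SimpleGraph V) (K : Set V) : Prop :=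
  ∃ a b : V, a ∉ K ∧ b ∉ K ∧ ¬ ConnAvoid G K a b

/-- `K` is a minimal cutset of `G`. -/
def IsMinimalCutset (G : SimpleGraph V) (K : Set V) : Prop :=
  IsCutset G K ∧ ∀ T ⊂ K, ¬ IsCutset G T

/-- A class of finite graphs. -/
def GraphClass : Type 1 :=
  ∀ (α : Type) [Finite α], SimpleGraph α → Prop

/-- A class is hereditary if it is closed under isomorphism and induced subgraphs. -/
def Hereditary (C : GraphClass) : Prop :=
  ∀ (α : Type) [Finite α] (G : SimpleGraph α) (β : Type) [Finite β] (H : SimpleGraph β)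
    (s : Set α), Nonempty (H ≃g G.induce s) → C α G → C β H

/-- `G ∈ 𝒢_C` : every minimal separator of `G` induces a graph in `C`. -/
def MemGC (C : GraphClass) {α : Type} [Finite α] (G : SimpleGraph α) : Prop :=
  ∀ S : Set α, IsMinimalSeparator G S → C ↥S (G.induce S)

/-- The class `𝒢_C`. -/
def GCclass (C : GraphClass) : GraphClass :=
  fun α inst G => @MemGC C α inst G

/-- `S` is a union of `k` (possibly empty) cliques of `G`. -/
def UnionOfCliques (G : SimpleGraph V) (k : ℕ) (S : Set V) : Prop :=
  ∃ f : Fin k → Set V, (∀ i, G.IsClique (f i)) ∧ S = ⋃ i, f i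

/-- `G ∈ 𝒢_k` : every minimal separator of `G` is a union of `k` cliques. -/
def MemGk (k : ℕ) (G : SimpleGraph V) : Prop :=
  ∀ S : Set V, IsMinimalSeparator G S → UnionOfCliques G k S

/-- The class `𝒢_k`. -/
def Gkclass (k : ℕ) : GraphClass := fun _ _ G => MemGk k G

/-- The class `𝒞_k` of graphs whose vertex set is a union of `k` cliques. -/
def Ckclass (k : ℕ) : GraphClass := fun _ _ G => UnionOfCliques G k Set.univ

/-- An induced minor model of `H` in `G`. -/
def IsIMModel (G : SimpleGraph V) (H : SimpleGraph W) (X : W → Set V) : Prop :=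
  (∀ w, (X w).Nonempty) ∧
  (∀ u w : W, u ≠ w → Disjoint (X u) (X w)) ∧
  (∀ w, (G.induce (X w)).Connected) ∧
  (∀ u w : W, u ≠ w → (H.Adj u w ↔ ∃ a ∈ X u, ∃ b ∈ X w, G.Adj a b))

/-- `H` is an induced minor of `G`. -/
def IsInducedMinor (H : SimpleGraph W) (G : SimpleGraph V) : Prop :=
  ∃ X : W → Set V, IsIMModel G H X

/-- The class `C` is closed under induced minors. -/
def IMClosed (C : GraphClass) : Prop :=
  ∀ (α : Type) [Finite α] (G : SimpleGraph α) (β : Type) [Finite β] (H : SimpleGraph β),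
    C α G → IsInducedMinor H G → C β H

/-- The class `C` is closed under the addition of edges. -/
def EdgeAddClosed (C : GraphClass) : Prop :=
  ∀ (α : Type) [Finite α] (G : SimpleGraph α) (a b : α), a ≠ b → ¬ G.Adj a b →
    C α G → C α (G ⊔ SimpleGraph.edge a b)

/-- `G ∈ ℳ_C` : `G ∉ C` but every proper induced minor of `G` is in `C`.
(For finite graphs, the proper induced minors of `G` are exactly the induced minors of `G`
not isomorphic to `G`.) -/
def MemMC (C : GraphClass) {α : Type} [Finite α] (G : SimpleGraph α) : Prop :=
  ¬ C α G ∧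
  ∀ (β : Type) [Finite β] (H : SimpleGraph β),
    IsInducedMinor H G → IsEmpty (H ≃g G) → C β H

/-- The complete join of two graphs. -/
def join (G : SimpleGraph V) (H : SimpleGraph W) : SimpleGraph (V ⊕ W) :=
  SimpleGraph.fromRel (fun x y =>
    match x, y with
    | Sum.inl a, Sum.inl b => G.Adj a b
    | Sum.inr a, Sum.inr b => H.Adj a b
    | _, _ => True)

/-- The class `C` is closed under the addition of universal vertices (up to isomorphism). -/
def UnivAddClosed (C : GraphClass) : Prop :=
  ∀ (α : Type) [Finite α] (G : SimpleGraph α) (β : Type) [Finite β] (H : SimpleGraph β),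
    C α G → Nonempty (H ≃g join (⊥ : SimpleGraph (Fin 1)) G) → C β H

/-- `G` has a universal vertex. -/
def HasUniversalVertex (G : SimpleGraph V) : Prop :=
  ∃ v : V, ∀ w : V, w ≠ v → G.Adj v w



/-- `G` is a theta: two nonadjacent vertices joined by three internally disjoint induced
paths of length at least two, with no other vertices or edges
(equivalently, a subdivision of `K_{2,3}`). -/
def IsTheta (G : SimpleGraph V) : Prop :=
  ∃ (a b : V) (P₁ P₂ P₃ : G.Walk a b),
    a ≠ b ∧
    P₁.IsPath ∧ P₂.IsPath ∧ P₃.IsPath ∧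
    2 ≤ P₁.length ∧ 2 ≤ P₂.length ∧ 2 ≤ P₃.length ∧
    (∀ v : V, v ∈ P₁.support → v ∈ P₂.support → v = a ∨ v = b) ∧
    (∀ v : V, v ∈ P₁.support → v ∈ P₃.support → v = a ∨ v = b) ∧
    (∀ v : V, v ∈ P₂.support → v ∈ P₃.support → v = a ∨ v = b) ∧
    (∀ v : V, v ∈ P₁.support ∨ v ∈ P₂.support ∨ v ∈ P₃.support) ∧
    (∀ u v : V, G.Adj u v ↔
      s(u, v) ∈ P₁.edges ∨ s(u, v) ∈ P₂.edges ∨ s(u, v) ∈ P₃.edges)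

/-- `G` is a pyramid: an apex `a` joined to a triangle `b₁b₂b₃` by three paths sharing only
`a`, at least two of which have length at least two, with no other vertices or edges. -/
def IsPyramid (G : SimpleGraph V) : Prop :=
  ∃ (a b₁ b₂ b₃ : V) (P₁ : G.Walk a b₁) (P₂ : G.Walk a b₂) (P₃ : G.Walk a b₃),
    G.Adj b₁ b₂ ∧ G.Adj b₁ b₃ ∧ G.Adj b₂ b₃ ∧
    P₁.IsPath ∧ P₂.IsPath ∧ P₃.IsPath ∧
    1 ≤ P₁.length ∧ 1 ≤ P₂.length ∧ 1 ≤ P₃.length ∧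
    ((2 ≤ P₁.length ∧ 2 ≤ P₂.length) ∨ (2 ≤ P₁.length ∧ 2 ≤ P₃.length) ∨
      (2 ≤ P₂.length ∧ 2 ≤ P₃.length)) ∧
    (∀ v : V, v ∈ P₁.support → v ∈ P₂.support → v = a) ∧
    (∀ v : V, v ∈ P₁.support → v ∈ P₃.support → v = a) ∧
    (∀ v : V, v ∈ P₂.support → v ∈ P₃.support → v = a) ∧
    (∀ v : V, v ∈ P₁.support ∨ v ∈ P₂.support ∨ v ∈ P₃.support) ∧
    (∀ u v : V, G.Adj u v ↔
      s(u, v) ∈ P₁.edges ∨ s(u, v) ∈ P₂.edges ∨ s(u, v) ∈ P₃.edges ∨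
      s(u, v) = s(b₁, b₂) ∨ s(u, v) = s(b₁, b₃) ∨ s(u, v) = s(b₂, b₃))

/-- `G` is a prism: two disjoint triangles joined by three pairwise disjoint paths, with no
other vertices or edges. -/
def IsPrism (G : SimpleGraph V) : Prop :=
  ∃ (a₁ a₂ a₃ b₁ b₂ b₃ : V) (P₁ : G.Walk a₁ b₁) (P₂ : G.Walk a₂ b₂) (P₃ : G.Walk a₃ b₃),
    G.Adj a₁ a₂ ∧ G.Adj a₁ a₃ ∧ G.Adj a₂ a₃ ∧
    G.Adj b₁ b₂ ∧ G.Adj b₁ b₃ ∧ G.Adj b₂ b₃ ∧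
    P₁.IsPath ∧ P₂.IsPath ∧ P₃.IsPath ∧
    1 ≤ P₁.length ∧ 1 ≤ P₂.length ∧ 1 ≤ P₃.length ∧
    (∀ v : V, v ∈ P₁.support → v ∈ P₂.support → False) ∧
    (∀ v : V, v ∈ P₁.support → v ∈ P₃.support → False) ∧
    (∀ v : V, v ∈ P₂.support → v ∈ P₃.support → False) ∧
    (∀ v : V, v ∈ P₁.support ∨ v ∈ P₂.support ∨ v ∈ P₃.support) ∧
    (∀ u v : V, G.Adj u v ↔
      s(u, v) ∈ P₁.edges ∨ s(u, v) ∈ P₂.edges ∨ s(u, v) ∈ P₃.edges ∨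
      s(u, v) = s(a₁, a₂) ∨ s(u, v) = s(a₁, a₃) ∨ s(u, v) = s(a₂, a₃) ∨
      s(u, v) = s(b₁, b₂) ∨ s(u, v) = s(b₁, b₃) ∨ s(u, v) = s(b₂, b₃))

/-- `G` is a long prism: a prism other than the complement of `C₆`, i.e. a prism in which at
least one of the three paths has length at least two. -/
def IsLongPrism (G : SimpleGraph V) : Prop :=
  ∃ (a₁ a₂ a₃ b₁ b₂ b₃ : V) (P₁ : G.Walk a₁ b₁) (P₂ : G.Walk a₂ b₂) (P₃ : G.Walk a₃ b₃),
    G.Adj a₁ a₂ ∧ G.Adj a₁ a₃ ∧ G.Adj a₂ a₃ ∧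
    G.Adj b₁ b₂ ∧ G.Adj b₁ b₃ ∧ G.Adj b₂ b₃ ∧
    P₁.IsPath ∧ P₂.IsPath ∧ P₃.IsPath ∧
    1 ≤ P₁.length ∧ 1 ≤ P₂.length ∧ 1 ≤ P₃.length ∧
    (2 ≤ P₁.length ∨ 2 ≤ P₂.length ∨ 2 ≤ P₃.length) ∧
    (∀ v : V, v ∈ P₁.support → v ∈ P₂.support → False) ∧
    (∀ v : V, v ∈ P₁.support → v ∈ P₃.support → False) ∧
    (∀ v : V, v ∈ P₂.support → v ∈ P₃.support → False) ∧
    (∀ v : V, v ∈ P₁.support ∨ v ∈ P₂.support ∨ v ∈ P₃.support) ∧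
    (∀ u v : V, G.Adj u v ↔
      s(u, v) ∈ P₁.edges ∨ s(u, v) ∈ P₂.edges ∨ s(u, v) ∈ P₃.edges ∨
      s(u, v) = s(a₁, a₂) ∨ s(u, v) = s(a₁, a₃) ∨ s(u, v) = s(a₂, a₃) ∨
      s(u, v) = s(b₁, b₂) ∨ s(u, v) = s(b₁, b₃) ∨ s(u, v) = s(b₂, b₃))

/-- `G` is a wheel: a hole (chordless cycle of length at least four) together with one
additional vertex having at least three neighbors on the hole. -/
def IsWheel (G : SimpleGraph V) : Prop :=
  ∃ (v x : V) (c : G.Walk x x),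
    c.IsCycle ∧ 4 ≤ c.length ∧ v ∉ c.support ∧
    (∀ u : V, u = v ∨ u ∈ c.support) ∧
    (∀ u w : V, u ∈ c.support → w ∈ c.support → G.Adj u w → s(u, w) ∈ c.edges) ∧
    3 ≤ {u : V | u ∈ c.support ∧ G.Adj v u}.ncard

/-- `G` is a broken wheel: a wheel in which the neighbors of the additional vertex induce a
disconnected subgraph of the hole. -/
def IsBrokenWheel (G : SimpleGraph V) : Prop :=
  ∃ (v x : V) (c : G.Walk x x),
    c.IsCycle ∧ 4 ≤ c.length ∧ v ∉ c.support ∧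
    (∀ u : V, u = v ∨ u ∈ c.support) ∧
    (∀ u w : V, u ∈ c.support → w ∈ c.support → G.Adj u w → s(u, w) ∈ c.edges) ∧
    3 ≤ {u : V | u ∈ c.support ∧ G.Adj v u}.ncard ∧
    ¬ (G.induce {u : V | u ∈ c.support ∧ G.Adj v u}).Connected

/-- `G` is diamond-free: it has no induced subgraph isomorphic to `K₄` minus an edge. -/
def DiamondFree (G : SimpleGraph V) : Prop :=
  ¬ ∃ a b c d : V, c ≠ d ∧ G.Adj a b ∧ G.Adj a c ∧ G.Adj a d ∧ G.Adj b c ∧ G.Adj b d ∧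
    ¬ G.Adj c d

/-- The short `n`-prism: two `n`-vertex cliques joined by a perfect matching. -/
def completePrism (n : ℕ) : SimpleGraph (Fin n ⊕ Fin n) :=
  SimpleGraph.fromRel (fun x y =>
    match x, y with
    | Sum.inl _, Sum.inl _ => True
    | Sum.inr _, Sum.inr _ => True
    | Sum.inl i, Sum.inr j => i = j
    | Sum.inr i, Sum.inl j => i = j)

/-- `G` is a complete prism, i.e. a short `n`-prism for some `n ≥ 3`. -/
def IsCompletePrism (G : SimpleGraph V) : Prop :=
  ∃ n : ℕ, 3 ≤ n ∧ Nonempty (G ≃g completePrism n)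

/-- `G` is a cycle. -/
def IsCycleGraph (G : SimpleGraph V) : Prop :=
  ∃ n : ℕ, 3 ≤ n ∧ Nonempty (G ≃g cycleGraph n)

/-- `G` is a complete graph. -/
def IsCompleteGraph (G : SimpleGraph V) : Prop :=
  ∀ u v : V, u ≠ v → G.Adj u v

/-- `G` has a clique-cutset. -/
def HasCliqueCutset (G : SimpleGraph V) : Prop :=
  ∃ K : Set V, G.IsClique K ∧ IsCutset G K



section Aux

variable {α β : Type}

private lemma connAvoid_map {G : SimpleGraph α} {G' : SimpleGraph β}
    (f : G →g G') (hf : Function.Injective f) {S : Set α} {a b : α}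
    (h : ConnAvoid G S a b) : ConnAvoid G' (f '' S) (f a) (f b) := by
  obtain ⟨p, hp⟩ := h
  refine ⟨p.map f, ?_⟩
  intro v hv
  rw [Walk.support_map, List.mem_map] at hv
  obtain ⟨u, hu, rfl⟩ := hv
  rintro ⟨w, hw, hwe⟩
  exact hp u hu (hf hwe ▸ hw)

private lemma connAvoid_iso_iff {G : SimpleGraph α} {G' : SimpleGraph β}
    (e : G ≃g G') (S : Set α) (a b : α) :
    ConnAvoid G S a b ↔ ConnAvoid G' (⇑e '' S) (e a) (e b) := by
  constructor
  · exact connAvoid_map e.toHom e.injective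
  · intro h
    have h2 : ConnAvoid G (⇑e.symm '' (⇑e '' S)) (e.symm (e a)) (e.symm (e b)) :=
      connAvoid_map e.symm.toHom e.symm.injective h
    have himg : ⇑e.symm '' (⇑e '' S) = S := by
      rw [Set.image_image]
      simp
    rw [himg] at h2
    simpa using h2

private lemma isSep_iso_iff {G : SimpleGraph α} {G' : SimpleGraph β}
    (e : G ≃g G') {S : Set α} {a b : α} :
    IsSep G a b S ↔ IsSep G' (e a) (e b) (⇑e '' S) := by
  unfold IsSep
  rw [e.injective.mem_set_image, e.injective.mem_set_image,
    connAvoid_iso_iff e S a b]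

private lemma isMinSep_iso {G : SimpleGraph α} {G' : SimpleGraph β}
    (e : G ≃g G') {S : Set α} {a b : α} (h : IsMinSep G a b S) :
    IsMinSep G' (e a) (e b) (⇑e '' S) := by
  refine ⟨(isSep_iso_iff e).mp h.1, ?_⟩
  intro T hT hsep
  refine h.2 (⇑e.symm '' T) ?_ ?_
  · have himg : ⇑e.symm '' (⇑e '' S) = S := by
      rw [Set.image_image]; simp
    have hsub : ⇑e.symm '' T ⊆ S := himg ▸ Set.image_mono hT.subset
    refine ⟨hsub, fun hcon => hT.not_subset ?_⟩
    rintro y ⟨x, hxS, rfl⟩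
    obtain ⟨z, hzT, hzx⟩ := hcon hxS
    have : z = e x := by
      have := congrArg e hzx
      simpa using this
    exact this ▸ hzT
  · have := (isSep_iso_iff e.symm).mp hsep
    simpa using this

private lemma exists_induce_walk {G : SimpleGraph α} {s : Set α} :
    ∀ {x y : α} (p : G.Walk x y) (hx : x ∈ s) (hy : y ∈ s),
    (∀ v ∈ p.support, v ∈ s) →
    ∃ q : (G.induce s).Walk ⟨x, hx⟩ ⟨y, hy⟩, ∀ v ∈ q.support, (v : α) ∈ p.support
  | _, _, Walk.nil, hx, hy, _ => ⟨Walk.nil, by simp⟩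
  | x, y, Walk.cons h p, hx, hy, hs => by
    have hw : _ ∈ s := hs _ (by rw [Walk.support_cons]; exact List.mem_cons_of_mem _ p.start_mem_support)
    obtain ⟨q, hq⟩ :=
      exists_induce_walk p hw hy (fun v hv => hs v (by rw [Walk.support_cons]; exact List.mem_cons_of_mem _ hv))
    refine ⟨Walk.cons (by exact h) q, ?_⟩
    intro v hv
    change v ∈ (⟨x, hx⟩ :: q.support) at hv
    rcases List.mem_cons.mp hv with h1 | h1
    · simp [h1]
    · simp [hq v h1]

private lemma exists_minSep_subset [Finite α] {G : SimpleGraph α} {a b : α} :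
    ∀ (n : ℕ) (T : Set α), T.ncard ≤ n → IsSep G a b T →
    ∃ S', S' ⊆ T ∧ IsMinSep G a b S' := by
  intro n
  induction n with
  | zero =>
    intro T hT hsep
    have hT0 : T = ∅ := by
      rw [← Set.ncard_eq_zero (Set.toFinite T)]
      omega
    subst hT0
    exact ⟨∅, subset_rfl, hsep, fun T' hT' _ =>
      (hT'.ne (Set.subset_empty_iff.mp hT'.subset)).elim⟩
  | succ n ih =>
    intro T hT hsep
    by_cases h : ∃ T', T' ⊂ T ∧ IsSep G a b T'
    · obtain ⟨T', hsub, hsep'⟩ := h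
      have hcard : T'.ncard ≤ n := by
        have := Set.ncard_lt_ncard hsub (Set.toFinite T)
        omega
      obtain ⟨S', h1, h2⟩ := ih T' hcard hsep'
      exact ⟨S', h1.trans hsub.subset, h2⟩
    · exact ⟨T, subset_rfl, hsep, fun T' hT' hs => h ⟨T', hT', hs⟩⟩

private lemma lift_minSep [Finite α] {G : SimpleGraph α} {s : Set α}
    {a b : ↥s} {S : Set ↥s} (hab : a ≠ b) (hadj : ¬ (G.induce s).Adj a b)
    (hmin : IsMinSep (G.induce s) a b S) :
    ∃ S' : Set α, IsMinimalSeparator G S' ∧ Subtype.val '' S ⊆ S' := by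
  classical
  set S₀ : Set α := Subtype.val '' S with hS₀
  set T₀ : Set α := S₀ ∪ sᶜ with hT₀
  have haT : (a : α) ∉ T₀ := by
    rintro (⟨w, hw, hwe⟩ | hc)
    · exact hmin.1.1 (Subtype.val_injective hwe ▸ hw)
    · exact hc a.2
  have hbT : (b : α) ∉ T₀ := by
    rintro (⟨w, hw, hwe⟩ | hc)
    · exact hmin.1.2.1 (Subtype.val_injective hwe ▸ hw)
    · exact hc b.2
  have hsepT : IsSep G (a : α) (b : α) T₀ := by
    refine ⟨haT, hbT, ?_⟩
    rintro ⟨p, hp⟩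
    have hsup : ∀ v ∈ p.support, v ∈ s := by
      intro v hv
      by_contra hc
      exact hp v hv (Or.inr hc)
    obtain ⟨q, hq⟩ := exists_induce_walk p a.2 b.2 hsup
    exact hmin.1.2.2 ⟨q, fun w hw hwS => hp (w : α) (hq w hw) (Or.inl ⟨w, hwS, rfl⟩)⟩
  obtain ⟨S', hS'T, hminS'⟩ := exists_minSep_subset T₀.ncard T₀ le_rfl hsepT
  refine ⟨S', ⟨(a : α), (b : α), ?_, ?_, hminS'⟩, ?_⟩
  · exact fun h => hab (Subtype.ext h)
  · exact fun h => hadj ((SimpleGraph.comap_adj).mpr h)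
  · rintro x ⟨v, hvS, rfl⟩
    by_contra hv
    have hnot : ¬ IsSep (G.induce s) a b (S \ {v}) :=
      hmin.2 (S \ {v}) (Set.sdiff_singleton_ssubset.mpr hvS)
    have hca : ConnAvoid (G.induce s) (S \ {v}) a b := by
      by_contra hc
      exact hnot ⟨fun h => hmin.1.1 h.1, fun h => hmin.1.2.1 h.1, hc⟩
    obtain ⟨q, hq⟩ := hca
    have hcon : ConnAvoid G S' (a : α) (b : α) := by
      refine ⟨q.map (SimpleGraph.Embedding.induce s).toHom, ?_⟩
      intro x hx
      change x ∈ (q.map (SimpleGraph.Embedding.induce s).toHom).support at hx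
      rw [Walk.support_map, List.mem_map] at hx
      obtain ⟨w, hw, rfl⟩ := hx
      intro hwS'
      rw [show ((SimpleGraph.Embedding.induce s (G := G)).toHom w : α) = (w : α) from rfl]
        at hwS'
      have hwT : (w : α) ∈ T₀ := hS'T hwS'
      have hws : (w : α) ∈ s := Subtype.coe_prop w
      rcases hwT with ⟨u, huS, hue⟩ | hc
      · have huw : u = w := Subtype.val_injective hue
        subst huw
        have : u = v := by
          by_contra hne
          exact hq u hw ⟨huS, hne⟩
        subst this
        exact hv hwS'
      · exact hc hws
    exact hminS'.1.2.2 hcon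

end Aux

/-- if `C` is a hereditary class of graphs, then `𝒢_C` is hereditary. -/
theorem statement_1 (C : GraphClass) (hC : Hereditary C) : Hereditary (GCclass C) := by
  intro α _ G β _ H s he hG
  obtain ⟨e⟩ := he
  intro S hS
  obtain ⟨a, b, hab, hadj, hmin⟩ := hS
  have hab' : e a ≠ e b := fun h => hab (e.injective h)
  have hadj' : ¬ (G.induce s).Adj (e a) (e b) := fun h => hadj (e.map_rel_iff.mp h)
  have hmin' : IsMinSep (G.induce s) (e a) (e b) (⇑e '' S) := isMinSep_iso e hmin
  obtain ⟨S', hS'sep, hsub⟩ := lift_minSep hab' hadj' hmin'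
  have hCS' : C ↥S' (G.induce S') := hG S' hS'sep
  classical
  refine hC ↥S' (G.induce S') ↥S (H.induce S)
    {x : ↥S' | (x : α) ∈ Subtype.val '' (⇑e '' S)} ⟨?_⟩ hCS'
  set t : Set ↥S' := {x : ↥S' | (x : α) ∈ Subtype.val '' (⇑e '' S)} with ht
  have hmem : ∀ v : ↥S, ((e (v : β) : ↥s) : α) ∈ Subtype.val '' (⇑e '' S) :=
    fun v => ⟨e (v : β), ⟨(v : β), v.2, rfl⟩, rfl⟩
  let f : ↥S → ↥t := fun v => ⟨⟨((e (v : β) : ↥s) : α), hsub (hmem v)⟩, hmem v⟩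
  have hfinj : Function.Injective f := by
    intro u v huv
    have h1 : ((e (u : β) : ↥s) : α) = ((e (v : β) : ↥s) : α) :=
      congrArg (fun x : ↥t => ((x : ↥S') : α)) huv
    exact Subtype.ext (e.injective (Subtype.ext h1))
  have hfsurj : Function.Surjective f := by
    intro x
    obtain ⟨w, hw, hwx⟩ := x.2
    obtain ⟨u, hu, rfl⟩ := hw
    refine ⟨⟨u, hu⟩, ?_⟩
    apply Subtype.ext
    apply Subtype.ext
    exact hwx
  exact RelIso.mk (Equiv.ofBijective f ⟨hfinj, hfsurj⟩) (by
    intro u v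
    show (G.induce s).Adj (e (u : β)) (e (v : β)) ↔ (H.induce S).Adj u v
    exact e.map_rel_iff)

end PaperSep
end

section
/- For every positive integer k, the class G_k is closed under gluing along a clique: if a graph G has a clique-cutset K with an associated cut-partition (A,B,K), and both induced subgraphs G[A ∪ K] and G[B ∪ K] belong to G_k, then G belongs to G_k. -/
open SimpleGraph

namespace PaperSep

variable {V : Type} {W : Type}

-- ### helper lemmas

variable {G : SimpleGraph V} {S T : Set V} {a b c : V}

lemma ConnAvoid.notMem_left (h : ConnAvoid G S a b) : a ∉ S := by
  obtain ⟨p, hp⟩ := h; exact hp a p.start_mem_support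

lemma ConnAvoid.notMem_right (h : ConnAvoid G S a b) : b ∉ S := by
  obtain ⟨p, hp⟩ := h; exact hp b p.end_mem_support

lemma ConnAvoid.symm (h : ConnAvoid G S a b) : ConnAvoid G S b a := by
  obtain ⟨p, hp⟩ := h
  exact ⟨p.reverse, fun v hv => hp v (by simpa [Walk.support_reverse] using hv)⟩

lemma ConnAvoid.trans (h : ConnAvoid G S a b) (h' : ConnAvoid G S b c) :
    ConnAvoid G S a c := by
  obtain ⟨p, hp⟩ := h; obtain ⟨q, hq⟩ := h'
  refine ⟨p.append q, fun v hv => ?_⟩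
  rcases (Walk.mem_support_append_iff p q).mp hv with h | h
  · exact hp v h
  · exact hq v h

lemma ConnAvoid.mono (hTS : T ⊆ S) (h : ConnAvoid G S a b) : ConnAvoid G T a b := by
  obtain ⟨p, hp⟩ := h; exact ⟨p, fun v hv hvT => hp v hv (hTS hvT)⟩

lemma ConnAvoid.adj_right (h : ConnAvoid G S a b) (hadj : G.Adj b c) (hc : c ∉ S) :
    ConnAvoid G S a c :=
  h.trans ⟨Walk.cons hadj Walk.nil, by
    intro v hv
    simp only [Walk.support_cons, Walk.support_nil, List.mem_cons, List.mem_singleton] at hv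
    rcases hv with rfl | rfl | h'
    · exact h.notMem_right
    · exact hc
    · exact absurd h' List.not_mem_nil⟩

lemma ConnAvoid.of_walk (p : G.Walk a b) (hp : ∀ v ∈ p.support, v ∉ S) {w : V}
    (hw : w ∈ p.support) : ConnAvoid G S a w := by
  classical
  exact ⟨p.takeUntil w hw, fun v hv => hp v (p.support_takeUntil_subset hw hv)⟩

lemma IsSep.symm' (h : IsSep G a b S) : IsSep G b a S :=
  ⟨h.2.1, h.1, fun hc => h.2.2 hc.symm⟩

lemma IsMinSep.symm' (h : IsMinSep G a b S) : IsMinSep G b a S :=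
  ⟨h.1.symm', fun T hT hsep => h.2 T hT hsep.symm'⟩

/-- Minimality implies every separator vertex has a neighbor reachable from `a`. -/
lemma minsep_neighbor (hmin : IsMinSep G a b S) {s : V} (hs : s ∈ S) :
    ∃ u, G.Adj s u ∧ ConnAvoid G S a u := by
  classical
  have ha : a ∉ S := hmin.1.1
  have hb : b ∉ S := hmin.1.2.1
  have hss : S \ {s} ⊂ S := Set.sdiff_singleton_ssubset.mpr hs
  have hne := hmin.2 _ hss
  have hconn : ConnAvoid G (S \ {s}) a b := by
    by_contra h
    exact hne ⟨fun h' => ha h'.1, fun h' => hb h'.1, h⟩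
  obtain ⟨p, hp⟩ := hconn
  have hsp : s ∈ p.support := by
    by_contra hsp
    exact hmin.1.2.2 ⟨p, fun v hv hvS => hp v hv ⟨hvS, by rintro rfl; exact hsp hv⟩⟩
  set q := p.takeUntil s hsp with hq
  have hcount : q.support.count s = 1 := p.count_support_takeUntil_eq_one hsp
  have hsa : s ≠ a := by rintro rfl; exact ha hs
  obtain ⟨w, hadj, r, hr⟩ := Walk.exists_eq_cons_of_ne hsa q.reverse
  refine ⟨w, hadj, r.reverse, fun v hv => ?_⟩
  rw [Walk.support_reverse, List.mem_reverse] at hv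
  have hsr : s ∉ r.support := by
    have h1 : q.reverse.support.count s = 1 := by
      rw [Walk.support_reverse, List.count_reverse]; exact hcount
    rw [hr] at h1
    simp only [Walk.support_cons, List.count_cons_self] at h1
    have : r.support.count s = 0 := by omega
    exact (List.count_eq_zero.mp this)
  have hvq : v ∈ q.support := by
    have : v ∈ q.reverse.support := by rw [hr]; simp [Walk.support_cons, hv]
    rwa [Walk.support_reverse, List.mem_reverse] at this
  intro hvS
  exact hp v (p.support_takeUntil_subset hsp hvq) ⟨hvS, by rintro rfl; exact hsr hv⟩

section Structured

variable {A B K : Set V}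

/-- Any walk from `A` to `B` passes through `K`. -/
lemma crossing (hAB : Disjoint A B) (hcover : A ∪ B ∪ K = Set.univ)
    (hanti : ∀ a ∈ A, ∀ b ∈ B, ¬ G.Adj a b) :
    ∀ {u v : V} (p : G.Walk u v), u ∈ A → v ∈ B → ∃ w ∈ p.support, w ∈ K := by
  intro u v p
  induction p with
  | nil => intro hu hv; exact absurd rfl (hAB.ne_of_mem hu hv)
  | @cons u w v h q ih =>
    intro hu hv
    have hw : w ∈ A ∪ B ∪ K := hcover ▸ Set.mem_univ w
    rcases hw with (hwA | hwB) | hwK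
    · obtain ⟨x, hx1, hx2⟩ := ih hwA hv
      exact ⟨x, by simp [Walk.support_cons, hx1], hx2⟩
    · exact absurd h (hanti u hu w hwB)
    · exact ⟨w, by simp [Walk.support_cons, q.start_mem_support], hwK⟩

/-- Shortcut lemma: a walk between `A ∪ K` vertices can be rerouted inside `A ∪ K`
using only vertices of the original walk. -/
lemma shortcut (hAB : Disjoint A B) (hBK : Disjoint B K)
    (hcover : A ∪ B ∪ K = Set.univ)
    (hanti : ∀ a ∈ A, ∀ b ∈ B, ¬ G.Adj a b) (hclique : G.IsClique K) :
    ∀ {u v : V} (p : G.Walk u v), v ∈ A ∪ K →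
      (u ∈ A ∪ K → ∃ q : G.Walk u v,
        (∀ w ∈ q.support, w ∈ A ∪ K) ∧ (∀ w ∈ q.support, w ∈ p.support)) ∧
      (u ∈ B → ∃ k0, k0 ∈ K ∧ k0 ∈ p.support ∧ ∃ q : G.Walk k0 v,
        (∀ w ∈ q.support, w ∈ A ∪ K) ∧ (∀ w ∈ q.support, w ∈ p.support)) := by
  intro u v p
  induction p with
  | nil =>
    intro hv
    refine ⟨fun hu => ⟨Walk.nil, ?_, ?_⟩, fun hu => ?_⟩
    · intro w hw; simp only [Walk.support_nil, List.mem_singleton] at hw; exact hw ▸ hv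
    · intro w hw; exact hw
    · rcases hv with hA | hK
      · exact absurd rfl (hAB.symm.ne_of_mem hu hA)
      · exact absurd rfl (hBK.ne_of_mem hu hK)
  | @cons u w v h q ih =>
    intro hv
    have ihh := ih hv
    have hwm : w ∈ A ∪ B ∪ K := hcover ▸ Set.mem_univ w
    constructor
    · intro hu
      rcases hwm with (hwA | hwB) | hwK
      · obtain ⟨q', h1, h2⟩ := ihh.1 (Or.inl hwA)
        refine ⟨Walk.cons h q', ?_, ?_⟩ <;> intro x hx <;>
          simp only [Walk.support_cons, List.mem_cons] at hx ⊢
        · rcases hx with rfl | hx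
          · exact hu
          · exact h1 x hx
        · rcases hx with rfl | hx
          · exact Or.inl rfl
          · exact Or.inr (h2 x hx)
      · -- w ∈ B : u must be in K
        have huK : u ∈ K := by
          rcases hu with hA | hK
          · exact absurd h (hanti u hA w hwB)
          · exact hK
        obtain ⟨k0, hk0K, hk0s, q', h1, h2⟩ := ihh.2 hwB
        by_cases he : u = k0
        · subst he
          exact ⟨q', h1, fun x hx => by
            simp only [Walk.support_cons, List.mem_cons]; exact Or.inr (h2 x hx)⟩
        · refine ⟨Walk.cons (hclique huK hk0K he) q', ?_, ?_⟩ <;> intro x hx <;>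
            simp only [Walk.support_cons, List.mem_cons] at hx ⊢
          · rcases hx with rfl | hx
            · exact Or.inr huK
            · exact h1 x hx
          · rcases hx with rfl | hx
            · exact Or.inl rfl
            · exact Or.inr (h2 x hx)
      · obtain ⟨q', h1, h2⟩ := ihh.1 (Or.inr hwK)
        refine ⟨Walk.cons h q', ?_, ?_⟩ <;> intro x hx <;>
          simp only [Walk.support_cons, List.mem_cons] at hx ⊢
        · rcases hx with rfl | hx
          · exact hu
          · exact h1 x hx
        · rcases hx with rfl | hx
          · exact Or.inl rfl
          · exact Or.inr (h2 x hx)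
    · intro hu
      rcases hwm with (hwA | hwB) | hwK
      · exact absurd h.symm (hanti w hwA u hu)
      · obtain ⟨k0, hk0K, hk0s, q', h1, h2⟩ := ihh.2 hwB
        refine ⟨k0, hk0K, ?_, q', h1, fun x hx => ?_⟩ <;>
          simp only [Walk.support_cons, List.mem_cons]
        · exact Or.inr hk0s
        · exact Or.inr (h2 x hx)
      · obtain ⟨q', h1, h2⟩ := ihh.1 (Or.inr hwK)
        refine ⟨w, hwK, ?_, q', h1, fun x hx => ?_⟩ <;>
          simp only [Walk.support_cons, List.mem_cons]
        · exact Or.inr q.start_mem_support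
        · exact Or.inr (h2 x hx)

end Structured

/-- Lifting a walk with support inside `s` to the induced subgraph. -/
lemma lift_walk {s : Set V} :
    ∀ {u v : V} (p : G.Walk u v) (hu : u ∈ s) (hv : v ∈ s),
      (∀ w ∈ p.support, w ∈ s) →
      ∃ q : (G.induce s).Walk ⟨u, hu⟩ ⟨v, hv⟩, ∀ w ∈ q.support, (w : V) ∈ p.support := by
  intro u v p
  induction p with
  | nil =>
    intro hu hv _
    refine ⟨Walk.nil, fun w hw => ?_⟩
    simp only [Walk.support_nil, List.mem_singleton] at hw ⊢
    simp [hw]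
  | @cons u w v h q ih =>
    intro hu hv hsupp
    have hw : w ∈ s := hsupp w (by simp [Walk.support_cons, q.start_mem_support])
    obtain ⟨q', hq'⟩ := ih hw hv (fun x hx => hsupp x (by simp [Walk.support_cons, hx]))
    refine ⟨Walk.cons (by exact h : (G.induce s).Adj ⟨u, hu⟩ ⟨w, hw⟩) q', ?_⟩
    intro x hx
    simp only [Walk.support_cons, List.mem_cons] at hx ⊢
    rcases List.mem_cons.mp hx with rfl | hx
    · exact Or.inl rfl
    · exact Or.inr (hq' x hx)


variable {V : Type}


lemma keyL (k : ℕ) (G : SimpleGraph V) (A B K : Set V)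
    (hAB : Disjoint A B) (hBK : Disjoint B K)
    (hcover : A ∪ B ∪ K = Set.univ)
    (hanti : ∀ a ∈ A, ∀ b ∈ B, ¬ G.Adj a b)
    (hclique : G.IsClique K)
    (hGA : MemGk k (G.induce (A ∪ K)))
    (S : Set V) (a b : V) (hmin : IsMinSep G a b S)
    (s0 : V) (hs0S : s0 ∈ S) (hs0A : s0 ∈ A)
    (hCb : ∀ v ∈ K, ¬ ConnAvoid G S b v) :
    UnionOfCliques G k S := by
  have hnc : ¬ ConnAvoid G S a b := hmin.1.2.2
  have full_a : ∀ s ∈ S, ∃ u, G.Adj s u ∧ ConnAvoid G S a u := fun s hs =>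
    minsep_neighbor hmin hs
  have full_b : ∀ s ∈ S, ∃ u, G.Adj s u ∧ ConnAvoid G S b u := fun s hs =>
    minsep_neighbor hmin.symm' hs
  obtain ⟨x, hadjx, hxCb⟩ := full_b s0 hs0S
  have hxA : x ∈ A := by
    have : x ∈ A ∪ B ∪ K := hcover ▸ Set.mem_univ x
    rcases this with (h | h) | h
    · exact h
    · exact absurd hadjx (hanti s0 hs0A x h)
    · exact absurd hxCb (hCb x h)
  -- every vertex connected to b avoiding S lies in A
  have Cb_sub_A : ∀ v, ConnAvoid G S b v → v ∈ A := by
    intro v hv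
    have hvm : v ∈ A ∪ B ∪ K := hcover ▸ Set.mem_univ v
    rcases hvm with (h | h) | h
    · exact h
    · -- v ∈ B : walk from x (∈ A) to v (∈ B) avoiding S must hit K
      exfalso
      obtain ⟨p, hp⟩ := hxCb.symm.trans hv
      obtain ⟨w, hwp, hwK⟩ := crossing hAB hcover hanti p hxA h
      exact hCb w hwK (hxCb.trans (ConnAvoid.of_walk p hp hwp))
    · exact absurd hv (hCb v h)
  have hS_AK : S ⊆ A ∪ K := by
    intro t ht
    obtain ⟨u, hadj, hu⟩ := full_b t ht
    have huA : u ∈ A := Cb_sub_A u hu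
    have : t ∈ A ∪ B ∪ K := hcover ▸ Set.mem_univ t
    rcases this with (h | h) | h
    · exact Or.inl h
    · exact absurd hadj.symm (hanti u huA t h)
    · exact Or.inr h
  obtain ⟨y, hadjy, hyCa⟩ := full_a s0 hs0S
  have hyAK : y ∈ A ∪ K := by
    have : y ∈ A ∪ B ∪ K := hcover ▸ Set.mem_univ y
    rcases this with (h | h) | h
    · exact Or.inl h
    · exact absurd hadjy (hanti s0 hs0A y h)
    · exact Or.inr h
  have hxS : x ∉ S := hxCb.notMem_right
  have hyS : y ∉ S := hyCa.notMem_right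
  have hxy_ne : x ≠ y := by
    rintro rfl
    exact hnc (hyCa.trans hxCb.symm)
  have hxy_nadj : ¬ G.Adj x y := by
    intro h
    exact hnc ((hyCa.adj_right h.symm hxS).trans hxCb.symm)
  -- work in the block H = G[A ∪ K]
  set H := G.induce (A ∪ K) with hH
  set x' : ↥(A ∪ K) := ⟨x, Or.inl hxA⟩ with hx'
  set y' : ↥(A ∪ K) := ⟨y, hyAK⟩ with hy'
  set S' : Set ↥(A ∪ K) := {v | (v : V) ∈ S} with hS'
  have hmain : IsMinimalSeparator H S' := by
    refine ⟨x', y', ?_, ?_, ⟨⟨hxS, hyS, ?_⟩, ?_⟩⟩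
    · exact fun h => hxy_ne (congrArg Subtype.val h)
    · exact fun h => hxy_nadj h
    · -- no walk in H from x' to y' avoiding S'
      rintro ⟨p, hp⟩
      have hGxy : ConnAvoid G S x y := by
        refine ⟨p.map ⟨Subtype.val, fun {c d} h => h⟩, fun v hv => ?_⟩
        rw [Walk.support_map, List.mem_map] at hv
        obtain ⟨w, hw, rfl⟩ := hv
        exact hp w hw
      exact hnc ((hyCa.trans hGxy.symm).trans hxCb.symm)
    · -- minimality
      intro T hT hTsep
      set T₀ : Set V := Subtype.val '' T with hT₀
      have hT₀S : T₀ ⊆ S := by rintro t ⟨t', ht', rfl⟩; exact hT.1 ht'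
      have hT₀ss : T₀ ⊂ S := by
        obtain ⟨s', hs'S, hs'T⟩ := Set.exists_of_ssubset hT
        refine ⟨hT₀S, fun hc => hs'T ?_⟩
        obtain ⟨t, ht, hte⟩ := hc hs'S
        exact (Subtype.val_injective hte) ▸ ht
      have hnsep := hmin.2 T₀ hT₀ss
      have hconn : ConnAvoid G T₀ a b := by
        by_contra h
        exact hnsep ⟨fun h' => hmin.1.1 (hT₀S h'), fun h' => hmin.1.2.1 (hT₀S h'), h⟩
      have hyx : ConnAvoid G T₀ y x :=
        ((hyCa.mono hT₀S).symm.trans hconn).trans (hxCb.mono hT₀S)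
      obtain ⟨p, hp⟩ := hyx
      obtain ⟨q, hq1, hq2⟩ := (shortcut hAB hBK hcover hanti hclique p (Or.inl hxA)).1 hyAK
      obtain ⟨q', hq'⟩ := lift_walk q hyAK (Or.inl hxA) hq1
      have : ConnAvoid H T y' x' := by
        refine ⟨q', fun w hw hwT => ?_⟩
        exact hp w (hq2 w (hq' w hw)) ⟨w, hwT, rfl⟩
      exact hTsep.2.2 this.symm
  obtain ⟨f, hf_cl, hf_un⟩ := hGA S' hmain
  refine ⟨fun i => Subtype.val '' f i, fun i => ?_, ?_⟩
  · rintro u ⟨u', hu', rfl⟩ v ⟨v', hv', rfl⟩ huv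
    have hne : u' ≠ v' := fun h => huv (congrArg Subtype.val h)
    exact hf_cl i hu' hv' hne
  · rw [← Set.image_iUnion, ← hf_un]
    ext s
    constructor
    · intro hs; exact ⟨⟨s, hS_AK hs⟩, hs, rfl⟩
    · rintro ⟨t, ht, rfl⟩; exact ht




/-- for every positive integer `k`, the class `𝒢_k` is closed under gluing
along a clique: if `(A, B, K)` is a cut-partition of `G` with `K` a clique, and both
`G[A ∪ K]` and `G[B ∪ K]` belong to `𝒢_k`, then `G` belongs to `𝒢_k`. -/
theorem statement_3 (k : ℕ) (hk : 1 ≤ k)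
    (V : Type) [Finite V] (G : SimpleGraph V) (A B K : Set V)
    (hA : A.Nonempty) (hB : B.Nonempty)
    (hAB : Disjoint A B) (hAK : Disjoint A K) (hBK : Disjoint B K)
    (hcover : A ∪ B ∪ K = Set.univ)
    (hanti : ∀ a ∈ A, ∀ b ∈ B, ¬ G.Adj a b)
    (hclique : G.IsClique K)
    (hGA : MemGk k (G.induce (A ∪ K))) (hGB : MemGk k (G.induce (B ∪ K))) :
    MemGk k G := by
  intro S hS
  obtain ⟨a, b, hab, hnadj, hmin⟩ := hS
  by_cases hSK : S ⊆ K
  · haveI : Nonempty (Fin k) := ⟨⟨0, hk⟩⟩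
    exact ⟨fun _ => S, fun _ => hclique.subset hSK, (Set.iUnion_const S).symm⟩
  · obtain ⟨s0, hs0S, hs0K⟩ := Set.not_subset.mp hSK
    have hnc := hmin.1.2.2
    have hdich : (∀ v ∈ K, ¬ ConnAvoid G S a v) ∨ (∀ v ∈ K, ¬ ConnAvoid G S b v) := by
      by_contra h
      push_neg at h
      obtain ⟨⟨k1, hk1K, hk1⟩, ⟨k2, hk2K, hk2⟩⟩ := h
      rcases eq_or_ne k1 k2 with rfl | hne
      · exact hnc (hk1.trans hk2.symm)
      · exact hnc ((hk1.adj_right (hclique hk1K hk2K hne) hk2.notMem_right).trans hk2.symm)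
    have hanti' : ∀ x ∈ B, ∀ y ∈ A, ¬ G.Adj x y := fun x hx y hy h => hanti y hy x hx h.symm
    have hcover' : B ∪ A ∪ K = Set.univ := by rw [Set.union_comm B A]; exact hcover
    have hs0AB : s0 ∈ A ∪ B := by
      have : s0 ∈ A ∪ B ∪ K := hcover ▸ Set.mem_univ s0
      rcases this with h | h
      · exact h
      · exact absurd h hs0K
    rcases hs0AB with hs0A | hs0B
    · rcases hdich with hCa | hCb
      · exact keyL k G A B K hAB hBK hcover hanti hclique hGA S b a hmin.symm' s0 hs0S hs0A hCa
      · exact keyL k G A B K hAB hBK hcover hanti hclique hGA S a b hmin s0 hs0S hs0A hCb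
    · rcases hdich with hCa | hCb
      · exact keyL k G B A K hAB.symm hAK hcover' hanti' hclique hGB S b a hmin.symm' s0 hs0S hs0B hCa
      · exact keyL k G B A K hAB.symm hAK hcover' hanti' hclique hGB S a b hmin s0 hs0S hs0B hCb

end PaperSep
end
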